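/- Let X be a finite subset of S³ with ∑_{x∈X} P(x) = 0 for all harmonic polynomials P of homogeneous degree ℓ ∈ {2,4,10}, and suppose X is antipodal with |X| = 24. Then the set of inner products of distinct points of X is contained in {-1, -1/2, 0, 1/2}. -/

import Mathlib

open MvPolynomial RealInnerProductSpace

noncomputable section Stmt18Aux

/-- The linear form `⟨y, x⟩` as a polynomial in `x`. -/
def sU (y : Fin 4 → ℝ) : MvPolynomial (Fin 4) ℝ := ∑ i, C (y i) * X i

/-- The squared radius `|x|²` as a polynomial. -/
def sR : MvPolynomial (Fin 4) ℝ := ∑ i : Fin 4, X i ^ 2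

/-- Zonal harmonic of degree 2 (homogenized Chebyshev U₂). -/
def sP2 (y : Fin 4 → ℝ) : MvPolynomial (Fin 4) ℝ := C 4 * sU y ^ 2 - sR

/-- Zonal harmonic of degree 4 (homogenized Chebyshev U₄). -/
def sP4 (y : Fin 4 → ℝ) : MvPolynomial (Fin 4) ℝ :=
  C 16 * sU y ^ 4 - C 12 * sU y ^ 2 * sR + sR ^ 2

/-- Zonal harmonic of degree 10 (homogenized Chebyshev U₁₀). -/
def sP10 (y : Fin 4 → ℝ) : MvPolynomial (Fin 4) ℝ :=
  C 1024 * sU y ^ 10 - C 2304 * sU y ^ 8 * sR + C 1792 * sU y ^ 6 * sR ^ 2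
    - C 560 * sU y ^ 4 * sR ^ 3 + C 60 * sU y ^ 2 * sR ^ 4 - sR ^ 5

lemma sU_hom (y : Fin 4 → ℝ) : (sU y).IsHomogeneous 1 := by
  apply IsHomogeneous.sum
  intro i _
  exact isHomogeneous_C_mul_X _ _

lemma sR_hom : (sR).IsHomogeneous 2 := by
  apply IsHomogeneous.sum
  intro i _
  exact isHomogeneous_X_pow _ _

lemma sP2_hom (y : Fin 4 → ℝ) : (sP2 y).IsHomogeneous 2 := by
  apply IsHomogeneous.sub
  · simpa using (((sU_hom y).pow 2).C_mul 4)
  · exact sR_hom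

lemma sP4_hom (y : Fin 4 → ℝ) : (sP4 y).IsHomogeneous 4 := by
  apply IsHomogeneous.add
  · apply IsHomogeneous.sub
    · simpa using (((sU_hom y).pow 4).C_mul 16)
    · simpa using ((((sU_hom y).pow 2).C_mul 12).mul sR_hom)
  · simpa using (sR_hom.pow 2)

lemma sP10_hom (y : Fin 4 → ℝ) : (sP10 y).IsHomogeneous 10 := by
  apply IsHomogeneous.sub
  apply IsHomogeneous.add
  apply IsHomogeneous.sub
  apply IsHomogeneous.add
  apply IsHomogeneous.sub
  · simpa using (((sU_hom y).pow 10).C_mul 1024)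
  · simpa using ((((sU_hom y).pow 8).C_mul 2304).mul sR_hom)
  · simpa using ((((sU_hom y).pow 6).C_mul 1792).mul (sR_hom.pow 2))
  · simpa using ((((sU_hom y).pow 4).C_mul 560).mul (sR_hom.pow 3))
  · simpa using ((((sU_hom y).pow 2).C_mul 60).mul (sR_hom.pow 4))
  · simpa using (sR_hom.pow 5)

lemma pderiv_sU (y : Fin 4 → ℝ) (i : Fin 4) : pderiv i (sU y) = C (y i) := by
  simp [sU, pderiv_C_mul, pderiv_X, Pi.single_apply, Finset.sum_ite_eq']

lemma pderiv_sR (i : Fin 4) : pderiv i sR = C 2 * X i := by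
  simp [sR, pderiv_pow, pderiv_X, Pi.single_apply, Finset.sum_ite_eq']
  rw [← map_ofNat (C : ℝ →+* MvPolynomial (Fin 4) ℝ) 2]

lemma pderiv_natCast (i : Fin 4) (n : ℕ) :
    pderiv i ((n : MvPolynomial (Fin 4) ℝ)) = 0 := by
  rw [← map_natCast (C : ℝ →+* MvPolynomial (Fin 4) ℝ), pderiv_C]

section Lap

variable (y : Fin 4 → ℝ) (hy : ∑ i, y i ^ 2 = 1)
include hy

lemma hy4C : (C (y 0))^2 + (C (y 1))^2 + (C (y 2))^2 + (C (y 3))^2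
    = (1 : MvPolynomial (Fin 4) ℝ) := by
  rw [← map_one (C : ℝ →+* MvPolynomial (Fin 4) ℝ), ← hy]
  simp [Fin.sum_univ_four]

omit hy

lemma hU4 : C (y 0) * X 0 + C (y 1) * X 1 + C (y 2) * X 2 + C (y 3) * X 3 = sU y := by
  simp [sU, Fin.sum_univ_four]

lemma hR4 : (X 0 : MvPolynomial (Fin 4) ℝ)^2 + X 1^2 + X 2^2 + X 3^2 = sR := by
  simp [sR, Fin.sum_univ_four]

include hy

lemma lap_sP2 : ∑ i : Fin 4, pderiv i (pderiv i (sP2 y)) = 0 := by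
  simp only [sP2, map_sub, map_add, pderiv_C_mul, pderiv_mul, pderiv_pow, pderiv_sU,
    pderiv_sR, pderiv_C, pderiv_natCast, pderiv_X_self, Fin.sum_univ_four, zero_mul,
    mul_zero, add_zero, zero_add]
  simp only [map_ofNat]
  linear_combination (8 : MvPolynomial (Fin 4) ℝ) * hy4C y hy

lemma lap_sP4 : ∑ i : Fin 4, pderiv i (pderiv i (sP4 y)) = 0 := by
  simp only [sP4, map_sub, map_add, pderiv_C_mul, pderiv_mul, pderiv_pow, pderiv_sU,
    pderiv_sR, pderiv_C, pderiv_natCast, pderiv_X_self, Fin.sum_univ_four, zero_mul,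
    mul_zero, add_zero, zero_add]
  simp only [map_ofNat]
  linear_combination (192 * sU y ^ 2 - 24 * sR) * hy4C y hy
    + (-96 * sU y) * hU4 y + (8 : MvPolynomial (Fin 4) ℝ) * hR4

lemma lap_sP10 : ∑ i : Fin 4, pderiv i (pderiv i (sP10 y)) = 0 := by
  simp only [sP10, map_sub, map_add, pderiv_C_mul, pderiv_mul, pderiv_pow, pderiv_sU,
    pderiv_sR, pderiv_C, pderiv_natCast, pderiv_X_self, Fin.sum_univ_four, zero_mul,
    mul_zero, add_zero, zero_add]
  simp only [map_ofNat]
  linear_combination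
    (92160 * sU y ^ 8 - 129024 * sU y ^ 6 * sR + 53760 * sU y ^ 4 * sR ^ 2
      - 6720 * sU y ^ 2 * sR ^ 3 + 120 * sR ^ 4) * hy4C y hy
    + (-73728 * sU y ^ 7 + 86016 * sU y ^ 5 * sR - 26880 * sU y ^ 3 * sR ^ 2
      + 1920 * sU y * sR ^ 3) * hU4 y
    + (14336 * sU y ^ 6 - 13440 * sU y ^ 4 * sR + 2880 * sU y ^ 2 * sR ^ 2
      - 80 * sR ^ 3) * hR4

end Lap

/-- The key polynomial identity: the homogenization of `1024·F` decomposes into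
zonal harmonics of degrees 0, 2, 4, 10. -/
lemma key_ident (y : Fin 4 → ℝ) :
    C 1024 * sU y ^ 10 - C 2304 * sU y ^ 8 * sR + C 1792 * sU y ^ 6 * sR ^ 2
      - C 528 * sU y ^ 4 * sR ^ 3 + C 52 * sU y ^ 2 * sR ^ 4
    = C 3 * sR ^ 5 + C 4 * sR ^ 4 * sP2 y + C 2 * sR ^ 3 * sP4 y + sP10 y := by
  simp only [sP2, sP4, sP10, map_ofNat]
  ring

lemma eval_sU (y x : Fin 4 → ℝ) : eval x (sU y) = ∑ i, y i * x i := by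
  simp [sU]

lemma eval_sR (x : Fin 4 → ℝ) : eval x sR = ∑ i : Fin 4, x i ^ 2 := by
  simp [sR]

end Stmt18Aux

/-- If `X ⊂ S³` is an antipodal 24-point set which is a spherical
`{2,4,10}`-design, then the inner products of distinct points of `X` lie in
`{-1, -1/2, 0, 1/2}`. -/
theorem stmt_18 (X : Finset (EuclideanSpace ℝ (Fin 4)))
    (hX : ∀ x ∈ X, ‖x‖ = 1) (hanti : ∀ x ∈ X, -x ∈ X)
    (hdesign : ∀ ℓ ∈ ({2, 4, 10} : Set ℕ), ∀ P : MvPolynomial (Fin 4) ℝ,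
      P.IsHomogeneous ℓ → (∑ i : Fin 4, pderiv i (pderiv i P)) = 0 →
      ∑ x ∈ X, eval (fun i => x i) P = 0)
    (hcard : X.card = 24) :
    ∀ x ∈ X, ∀ y ∈ X, x ≠ y → ⟪x, y⟫ ∈ ({-1, -(1/2), 0, 1/2} : Set ℝ) := by
  classical
  intro x₀ hx₀ y hyX hne
  -- inner products are coordinate sums
  have hinner : ∀ x z : EuclideanSpace ℝ (Fin 4), ⟪x, z⟫ = ∑ i, x i * z i := by
    intro x z
    simp [PiLp.inner_apply, RCLike.inner_apply, conj_trivial]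
    exact Finset.sum_congr rfl fun i _ => mul_comm _ _
  -- norms
  have hsq : ∀ x ∈ X, ∑ i : Fin 4, x i ^ 2 = 1 := by
    intro x hx
    have h1 : ⟪x, x⟫ = 1 := by
      rw [real_inner_self_eq_norm_sq, hX x hx]; norm_num
    rw [hinner x x] at h1
    simpa [sq] using h1
  have hyy : ∑ i : Fin 4, y i ^ 2 = 1 := hsq y hyX
  have hyy' : ⟪y, y⟫ = 1 := by
    rw [real_inner_self_eq_norm_sq, hX y hyX]; norm_num
  -- the LP function G(t) = 1024 F(t)
  set G : ℝ → ℝ := fun t => 1024*t^10 - 2304*t^8 + 1792*t^6 - 528*t^4 + 52*t^2 with hG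
  -- pointwise identity from key_ident
  have key : ∀ x ∈ X, G ⟪x, y⟫ = 3 + (4 * eval (fun i => x i) (sP2 y)
      + (2 * eval (fun i => x i) (sP4 y) + eval (fun i => x i) (sP10 y))) := by
    intro x hx
    have h := congrArg (eval (fun i => x i)) (key_ident y)
    simp only [map_sub, map_add, map_mul, map_pow, eval_C, eval_sU, eval_sR] at h
    have hx1 : ∑ i : Fin 4, x i ^ 2 = 1 := hsq x hx
    have ht : ∑ i : Fin 4, y i * x i = ⟪x, y⟫ := by
      rw [hinner x y]; exact Finset.sum_congr rfl fun i _ => mul_comm _ _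
    rw [hx1, ht] at h
    rw [hG]
    simpa using h.trans (by ring)
  -- design conditions
  have hS2 : ∑ x ∈ X, eval (fun i => x i) (sP2 y) = 0 :=
    hdesign 2 (by norm_num) _ (sP2_hom y) (lap_sP2 y hyy)
  have hS4 : ∑ x ∈ X, eval (fun i => x i) (sP4 y) = 0 :=
    hdesign 4 (by norm_num) _ (sP4_hom y) (lap_sP4 y hyy)
  have hS10 : ∑ x ∈ X, eval (fun i => x i) (sP10 y) = 0 :=
    hdesign 10 (by norm_num) _ (sP10_hom y) (lap_sP10 y hyy)
  -- total sum
  have hsum : ∑ x ∈ X, G ⟪x, y⟫ = 72 := by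
    rw [Finset.sum_congr rfl key]
    rw [Finset.sum_add_distrib, Finset.sum_add_distrib, Finset.sum_add_distrib,
      ← Finset.mul_sum, ← Finset.mul_sum, hS2, hS4, hS10, Finset.sum_const, hcard]
    norm_num
  -- antipode
  have hny : -y ∈ X := hanti y hyX
  have hyne : -y ≠ y := by
    intro h
    have hyy0 : y + y = 0 := by nth_rewrite 1 [← h]; exact neg_add_cancel y
    have h0 : y = 0 := by
      have h2 : (2:ℝ) • y = 0 := by rw [two_smul]; exact hyy0
      simpa using (smul_eq_zero.mp h2).resolve_left (by norm_num)
    rw [h0, inner_zero_left] at hyy'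
    norm_num at hyy'
  have hGy : G ⟪y, y⟫ = 36 := by rw [hyy', hG]; norm_num
  have hGny : G ⟪-y, y⟫ = 36 := by
    rw [inner_neg_left, hyy', hG]; norm_num
  -- split off y and -y
  have hmem' : -y ∈ X.erase y := Finset.mem_erase.mpr ⟨hyne, hny⟩
  have h1 : G ⟪y, y⟫ + ∑ x ∈ X.erase y, G ⟪x, y⟫ = ∑ x ∈ X, G ⟪x, y⟫ :=
    Finset.add_sum_erase X (fun x => G ⟪x, y⟫) hyX
  have h2 : G ⟪-y, y⟫ + ∑ x ∈ (X.erase y).erase (-y), G ⟪x, y⟫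
      = ∑ x ∈ X.erase y, G ⟪x, y⟫ :=
    Finset.add_sum_erase _ (fun x => G ⟪x, y⟫) hmem'
  have hrest : ∑ x ∈ (X.erase y).erase (-y), G ⟪x, y⟫ = 0 := by
    rw [hGy] at h1; rw [hGny] at h2; linarith [hsum, h1, h2]
  have hnonneg : ∀ x ∈ (X.erase y).erase (-y), 0 ≤ G ⟪x, y⟫ := by
    intro x _
    have : G ⟪x, y⟫ = 1024 * (⟪x, y⟫ * (⟪x, y⟫^2 - 1/4))^2 * ((⟪x, y⟫^2 - 7/8)^2 + 3/64) := by
      rw [hG]; ring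
    rw [this]; positivity
  by_cases hxny : x₀ = -y
  · rw [hxny, inner_neg_left, hyy']
    left; norm_num
  · have hx₀mem : x₀ ∈ (X.erase y).erase (-y) :=
      Finset.mem_erase.mpr ⟨hxny, Finset.mem_erase.mpr ⟨hne, hx₀⟩⟩
    have h0 : G ⟪x₀, y⟫ = 0 :=
      (Finset.sum_eq_zero_iff_of_nonneg hnonneg).mp hrest x₀ hx₀mem
    set t := ⟪x₀, y⟫ with htdef
    have h0' : 1024 * (t * (t^2 - 1/4))^2 * ((t^2 - 7/8)^2 + 3/64) = 0 := by
      rw [hG] at h0; linear_combination h0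
    have hB : (0:ℝ) < (t^2 - 7/8)^2 + 3/64 := by positivity
    have hA : t * (t^2 - 1/4) = 0 := by
      rcases mul_eq_zero.mp h0' with h | h
      · rcases mul_eq_zero.mp h with h' | h'
        · norm_num at h'
        · exact pow_eq_zero_iff (by norm_num) |>.mp h'
      · exact absurd h (ne_of_gt hB)
    rcases mul_eq_zero.mp hA with h | h
    · right; right; left; exact h
    · have : (t - 1/2) * (t + 1/2) = 0 := by linear_combination h
      rcases mul_eq_zero.mp this with h' | h'
      · right; right; right
        have : t = 1/2 := by linarith
        simpa using this
      · right; left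
        have : t = -(1/2) := by linarith
        simpa using this
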